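/- For n ≥ 4, exactly 2 matrices in PSC_n^{0,0} have exponent 2(n−2), the maximum possible. -/

import Mathlib

def IsPrimitive {n : ℕ} (A : Matrix (Fin n) (Fin n) ℝ) : Prop :=
  (∀ i j, 0 ≤ A i j) ∧ ∃ k : ℕ, 0 < k ∧ ∀ i j, 0 < (A ^ k) i j

def ExpIs {n : ℕ} (A : Matrix (Fin n) (Fin n) ℝ) (e : ℕ) : Prop :=
  IsLeast {k : ℕ | 0 < k ∧ ∀ i j, 0 < (A ^ k) i j} e

/-- A `(0,1)` companion matrix: superdiagonal entries `1` and all other entries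
`0` in the first `n-1` rows; last-row entries in `{0,1}`. -/
def IsCompanion {n : ℕ} (C : Matrix (Fin n) (Fin n) ℝ) : Prop :=
  ∀ i j : Fin n,
    if (i : ℕ) + 1 < n then (C i j = if (j : ℕ) = (i : ℕ) + 1 then 1 else 0)
    else (C i j = 0 ∨ C i j = 1)

/-- The set `C_n^{α,ε}` of symmetric companion matrices `C + Cᵀ` with
`c_{n,1} = α` and `c_{n,n} = ε`. -/
def companionClass (n : ℕ) (hn : 0 < n) (α ε : ℝ) :
    Set (Matrix (Fin n) (Fin n) ℝ) :=
  {A | ∃ C : Matrix (Fin n) (Fin n) ℝ, IsCompanion C ∧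
    C ⟨n - 1, by omega⟩ ⟨0, hn⟩ = α ∧ C ⟨n - 1, by omega⟩ ⟨n - 1, by omega⟩ = ε ∧
    A = C + C.transpose}

/-- `mRun S` : the maximum length of a run of consecutive integers contained in
`S` (`0` for the empty set). -/
noncomputable def mRun (S : Set ℕ) : ℕ := sSup {L : ℕ | ∃ a : ℕ, ∀ t, t < L → a + t ∈ S}

/-- The exponent set of a family of matrices. -/
def expSet {n : ℕ} (X : Set (Matrix (Fin n) (Fin n) ℝ)) : Set ℕ :=
  {e | ∃ A ∈ X, IsPrimitive A ∧ ExpIs A e}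


set_option maxHeartbeats 1000000
set_option linter.all false

namespace PSCaux

/-- walks of length `k` in the support relation `R` -/
def HasWalk {n : ℕ} (R : Fin n → Fin n → Prop) : ℕ → Fin n → Fin n → Prop
  | 0 => fun i j => i = j
  | k+1 => fun i j => ∃ w, R i w ∧ HasWalk R k w j

variable {n : ℕ} {R : Fin n → Fin n → Prop}

theorem hasWalk_zero {i j : Fin n} : HasWalk R 0 i j ↔ i = j := Iff.rfl

theorem hasWalk_succ {k : ℕ} {i j : Fin n} :
    HasWalk R (k+1) i j ↔ ∃ w, R i w ∧ HasWalk R k w j := Iff.rfl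

theorem HasWalk.append {k l : ℕ} {i j m : Fin n}
    (h1 : HasWalk R k i j) (h2 : HasWalk R l j m) : HasWalk R (k + l) i m := by
  induction k generalizing i with
  | zero => rw [hasWalk_zero] at h1; subst h1; simpa using h2
  | succ k ih =>
    obtain ⟨w, hw, h'⟩ := h1
    rw [Nat.succ_add]
    exact ⟨w, hw, ih h'⟩

theorem HasWalk.symm (hsym : ∀ a b, R a b → R b a) {k : ℕ} {i j : Fin n}
    (h : HasWalk R k i j) : HasWalk R k j i := by
  induction k generalizing i with
  | zero => rw [hasWalk_zero] at h ⊢; exact h.symm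
  | succ k ih =>
    obtain ⟨w, hw, h'⟩ := h
    exact (ih h').append ⟨i, hsym _ _ hw, rfl⟩

theorem walk_path (hsym : ∀ a b, R a b → R b a)
    (hpath : ∀ a b : Fin n, (a : ℕ) + 1 = (b : ℕ) → R a b) :
    ∀ (d : ℕ) (u v : Fin n), ((u : ℕ) + d = v ∨ (v : ℕ) + d = u) → HasWalk R d u v := by
  intro d
  induction d with
  | zero =>
    intro u v h
    have : u = v := Fin.ext (by omega)
    exact this
  | succ d ih =>
    intro u v h
    rcases h with h | h
    · have hu1 : (u : ℕ) + 1 < n := by have := v.isLt; omega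
      exact ⟨⟨(u : ℕ) + 1, hu1⟩, hpath _ _ rfl, ih _ _ (Or.inl (by simp; omega))⟩
    · have hu : 1 ≤ (u : ℕ) := by omega
      refine ⟨⟨(u : ℕ) - 1, by omega⟩, hsym _ _ (hpath _ _ (by simp; omega)),
        ih _ _ (Or.inr (by simp; omega))⟩

theorem walk_two (hsym : ∀ a b, R a b → R b a)
    (hpath : ∀ a b : Fin n, (a : ℕ) + 1 = (b : ℕ) → R a b) (hn : 2 ≤ n) (u : Fin n) :
    HasWalk R 2 u u := by
  by_cases h : (u : ℕ) + 1 < n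
  · exact ⟨⟨(u : ℕ) + 1, h⟩, hpath _ _ rfl, ⟨u, hsym _ _ (hpath _ _ rfl), rfl⟩⟩
  · have hu : 1 ≤ (u : ℕ) := by have := u.isLt; omega
    have hstep : R ⟨(u : ℕ) - 1, by omega⟩ u := hpath _ _ (by simp; omega)
    exact ⟨⟨(u : ℕ) - 1, by omega⟩, hsym _ _ hstep, ⟨u, hstep, rfl⟩⟩

theorem walk_pad_to (hsym : ∀ a b, R a b → R b a)
    (hpath : ∀ a b : Fin n, (a : ℕ) + 1 = (b : ℕ) → R a b) (hn : 2 ≤ n)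
    {L k : ℕ} {u v : Fin n} (h : HasWalk R L u v) (hLk : L ≤ k) (hpar : L % 2 = k % 2) :
    HasWalk R k u v := by
  obtain ⟨t, rfl⟩ : ∃ t, k = 2 * t + L := ⟨(k - L) / 2, by omega⟩
  clear hLk hpar
  induction t with
  | zero => simpa using h
  | succ t ih =>
    have h2 : HasWalk R (2 + (2 * t + L)) u v := (walk_two hsym hpath hn u).append ih
    have he : 2 * (t + 1) + L = 2 + (2 * t + L) := by omega
    rw [he]; exact h2

theorem pow_entry_nonneg {A : Matrix (Fin n) (Fin n) ℝ} (h0 : ∀ i j, 0 ≤ A i j) :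
    ∀ (k : ℕ) (i j : Fin n), 0 ≤ (A ^ k) i j := by
  intro k
  induction k with
  | zero =>
    intro i j
    rw [pow_zero, Matrix.one_apply]
    split <;> norm_num
  | succ k ih =>
    intro i j
    rw [pow_succ, Matrix.mul_apply]
    exact Finset.sum_nonneg fun w _ => mul_nonneg (ih i w) (h0 w j)

theorem pow_entry_pos_iff {A : Matrix (Fin n) (Fin n) ℝ} (h0 : ∀ i j, 0 ≤ A i j) :
    ∀ (k : ℕ) (i j : Fin n),
      0 < (A ^ k) i j ↔ HasWalk (fun a b => 0 < A a b) k i j := by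
  intro k
  induction k with
  | zero =>
    intro i j
    rw [pow_zero, Matrix.one_apply, hasWalk_zero]
    split <;> simp_all
  | succ k ih =>
    intro i j
    rw [pow_succ', Matrix.mul_apply, hasWalk_succ]
    constructor
    · intro h
      by_contra hc
      push_neg at hc
      have hz : ∀ w ∈ Finset.univ, A i w * (A ^ k) w j = 0 := by
        intro w _
        rcases lt_or_eq_of_le (h0 i w) with hw | hw
        · have : ¬ HasWalk (fun a b => 0 < A a b) k w j := hc w hw
          have : ¬ (0 < (A ^ k) w j) := fun hp => this ((ih w j).1 hp)
          have hz2 : (A ^ k) w j = 0 := le_antisymm (not_lt.1 this) (pow_entry_nonneg h0 k w j)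
          rw [hz2, mul_zero]
        · rw [← hw, zero_mul]
      rw [Finset.sum_eq_zero hz] at h
      exact lt_irrefl 0 h
    · rintro ⟨w, hw, hwalk⟩
      exact Finset.sum_pos' (fun w _ => mul_nonneg (h0 i w) (pow_entry_nonneg h0 k w j))
        ⟨w, Finset.mem_univ w, mul_pos hw ((ih w j).2 hwalk)⟩

theorem walk_parity (hpar : ∀ a b, R a b → ((a : ℕ) + (b : ℕ)) % 2 = 1) :
    ∀ (k : ℕ) (u v : Fin n), HasWalk R k u v → (k + (u : ℕ) + (v : ℕ)) % 2 = 0 := by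
  intro k
  induction k with
  | zero => intro u v h; rw [hasWalk_zero] at h; subst h; omega
  | succ k ih =>
    rintro u v ⟨w, hw, h⟩
    have h1 := hpar _ _ hw
    have h2 := ih w v h
    omega

/-- minimal length of a walk from `v` to `0` of parity `p` in the lollipop graph -/
def mFun (n v p : ℕ) : ℕ :=
  if v ≤ n - 3 then (if (v + p) % 2 = 0 then v else 2 * n - 3 - v)
  else if v = n - 2 then (if (v + p) % 2 = 0 then v else n - 1)
  else (if (n + p) % 2 = 0 then n - 2 else n - 1)

theorem mFun_step (hn : 4 ≤ n) (v w p q : ℕ) (hv : v < n) (hw : w < n)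
    (hq : q < 2) (hpq : (p + q) % 2 = 1)
    (hedge : v + 1 = w ∨ w + 1 = v ∨ (v = n-1 ∧ w = n-3) ∨ (v = n-3 ∧ w = n-1)) :
    mFun n v q ≤ mFun n w p + 1 := by
  unfold mFun
  split_ifs <;> omega

theorem lol_walk_lb (hn : 4 ≤ n)
    (hR : ∀ a b : Fin n, R a b →
      ((a : ℕ) + 1 = b ∨ (b : ℕ) + 1 = a ∨ ((a : ℕ) = n-1 ∧ (b : ℕ) = n-3) ∨
        ((a : ℕ) = n-3 ∧ (b : ℕ) = n-1))) :
    ∀ (k : ℕ) (v z : Fin n), (z : ℕ) = 0 → HasWalk R k v z → mFun n (v : ℕ) (k % 2) ≤ k := by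
  intro k
  induction k with
  | zero =>
    intro v z hz h
    rw [hasWalk_zero] at h
    subst h
    unfold mFun
    split_ifs <;> omega
  | succ k ih =>
    rintro v z hz ⟨w, hw, h⟩
    have h1 := ih w z hz h
    have h2 := hR _ _ hw
    have h3 : mFun n (v : ℕ) ((k+1) % 2) ≤ mFun n (w : ℕ) (k % 2) + 1 :=
      mFun_step hn _ _ _ _ v.isLt w.isLt (by omega) (by omega) h2
    omega

theorem walk_via_chord (hsym : ∀ a b, R a b → R b a)
    (hpath : ∀ a b : Fin n, (a : ℕ) + 1 = (b : ℕ) → R a b)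
    {a b : ℕ} (ha : a < n) (hb : b < n) (hab : R ⟨a, ha⟩ ⟨b, hb⟩) (u v : Fin n) :
    HasWalk R ((a - (u : ℕ) + ((u : ℕ) - a)) + 1 + (b - (v : ℕ) + ((v : ℕ) - b))) u v := by
  have w1 : HasWalk R (a - (u : ℕ) + ((u : ℕ) - a)) u ⟨a, ha⟩ :=
    walk_path hsym hpath _ u ⟨a, ha⟩ (by simp only [Fin.val_mk]; omega)
  have w2 : HasWalk R 1 ⟨a, ha⟩ ⟨b, hb⟩ := ⟨⟨b, hb⟩, hab, rfl⟩
  have w3 : HasWalk R (b - (v : ℕ) + ((v : ℕ) - b)) ⟨b, hb⟩ v :=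
    walk_path hsym hpath _ ⟨b, hb⟩ v (by simp only [Fin.val_mk]; omega)
  exact (w1.append w2).append w3

theorem lol_walk_ub (hn : 4 ≤ n) (hsym : ∀ a b, R a b → R b a)
    (hpath : ∀ a b : Fin n, (a : ℕ) + 1 = (b : ℕ) → R a b)
    (hchord : R ⟨n-3, by omega⟩ ⟨n-1, by omega⟩) :
    ∀ u v : Fin n, HasWalk R (2*n-4) u v := by
  intro u v
  have hu := u.isLt; have hv := v.isLt
  by_cases hp : (((u : ℕ)) + (v : ℕ)) % 2 = 0
  · exact walk_pad_to hsym hpath (by omega)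
      (walk_path hsym hpath (((v:ℕ) - u) + ((u:ℕ) - v)) u v (by omega)) (by omega) (by omega)
  · have w1 := walk_via_chord hsym hpath (by omega : n-3 < n) (by omega : n-1 < n) hchord u v
    have w2 := (walk_via_chord hsym hpath (by omega : n-3 < n) (by omega : n-1 < n) hchord v u).symm hsym
    by_cases h1 : ((n-3) - (u:ℕ) + ((u:ℕ) - (n-3))) + 1 + ((n-1) - (v:ℕ) + ((v:ℕ) - (n-1))) ≤ 2*n-4
    · exact walk_pad_to hsym hpath (by omega) w1 h1 (by omega)
    · exact walk_pad_to hsym hpath (by omega) w2 (by omega) (by omega)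

theorem caseB_walk_ub (hn : 4 ≤ n) (hsym : ∀ a b, R a b → R b a)
    (hpath : ∀ a b : Fin n, (a : ℕ) + 1 = (b : ℕ) → R a b)
    {j : ℕ} (hj1 : 1 ≤ j) (hj5 : j ≤ n - 5) (hjp : (n + j) % 2 = 1)
    (hchord : R ⟨j, by omega⟩ ⟨n-1, by omega⟩) :
    ∀ u v : Fin n, HasWalk R (2*n-6) u v := by
  intro u v
  have hu := u.isLt; have hv := v.isLt
  by_cases hp : (((u : ℕ)) + (v : ℕ)) % 2 = 0
  · exact walk_pad_to hsym hpath (by omega)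
      (walk_path hsym hpath (((v:ℕ) - u) + ((u:ℕ) - v)) u v (by omega)) (by omega) (by omega)
  · have w1 := walk_via_chord hsym hpath (by omega : j < n) (by omega : n-1 < n) hchord u v
    have w2 := (walk_via_chord hsym hpath (by omega : j < n) (by omega : n-1 < n) hchord v u).symm hsym
    by_cases h1 : (j - (u:ℕ) + ((u:ℕ) - j)) + 1 + ((n-1) - (v:ℕ) + ((v:ℕ) - (n-1))) ≤ 2*n-6
    · exact walk_pad_to hsym hpath (by omega) w1 h1 (by omega)
    · exact walk_pad_to hsym hpath (by omega) w2 (by omega) (by omega)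

theorem caseC_walk_ub (hn : 4 ≤ n) (hsym : ∀ a b, R a b → R b a)
    (hpath : ∀ a b : Fin n, (a : ℕ) + 1 = (b : ℕ) → R a b)
    {j : ℕ} (hj1 : 1 ≤ j) (hj4 : j ≤ n - 4) (hjp : (n + j) % 2 = 0)
    (hchordT : R ⟨n-3, by omega⟩ ⟨n-1, by omega⟩)
    (hchordJ : R ⟨n-1, by omega⟩ ⟨j, by omega⟩) :
    ∀ u v : Fin n, HasWalk R (2*n-5) u v := by
  intro u v
  have hu := u.isLt; have hv := v.isLt
  have hn5 : 5 ≤ n := by omega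
  by_cases hp : (((u : ℕ)) + (v : ℕ)) % 2 = 1
  · exact walk_pad_to hsym hpath (by omega)
      (walk_path hsym hpath (((v:ℕ) - u) + ((u:ℕ) - v)) u v (by omega)) (by omega) (by omega)
  · by_cases hv2 : 2 ≤ (v : ℕ)
    · -- g3 : u → (n-3) → (n-1) → v , length |u-(n-3)| + 1 + (n-1-v)
      have w1 := walk_via_chord hsym hpath (by omega : n-3 < n) (by omega : n-1 < n) hchordT u v
      exact walk_pad_to hsym hpath (by omega) w1 (by omega) (by omega)
    · -- g1 : u → (n-3) → (n-1) → j → v, length |u-(n-3)| + 2 + |j - v|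
      have w1 : HasWalk R (((n-3) - (u:ℕ) + ((u:ℕ) - (n-3))) + 1 + 0) u ⟨n-1, by omega⟩ := by
        have := walk_via_chord hsym hpath (by omega : n-3 < n) (by omega : n-1 < n) hchordT u
          ⟨n-1, by omega⟩
        simpa using this
      have w2 : HasWalk R 1 ⟨n-1, by omega⟩ ⟨j, by omega⟩ := ⟨⟨j, by omega⟩, hchordJ, rfl⟩
      have w3 : HasWalk R (j - (v:ℕ) + ((v:ℕ) - j)) ⟨j, by omega⟩ v :=
        walk_path hsym hpath _ _ v (by simp only [Fin.val_mk]; omega)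
      have w := (w1.append w2).append w3
      exact walk_pad_to hsym hpath (by omega) w (by omega) (by omega)

section Support

theorem support_iff (hn : 4 ≤ n) {C : Matrix (Fin n) (Fin n) ℝ}
    (hC : IsCompanion C) (hα : C ⟨n-1, by omega⟩ ⟨0, Nat.lt_of_lt_of_le (by norm_num) hn⟩ = 0)
    (hε : C ⟨n-1, by omega⟩ ⟨n-1, by omega⟩ = 0) (i j : Fin n) :
    0 < (C + C.transpose) i j ↔
      ((i:ℕ) + 1 = (j:ℕ) ∨ (j:ℕ) + 1 = (i:ℕ) ∨
       ((i:ℕ) = n-1 ∧ C ⟨n-1, by omega⟩ j = 1) ∨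
       ((j:ℕ) = n-1 ∧ C ⟨n-1, by omega⟩ i = 1)) := by
  have hb : ∀ v : Fin n, C ⟨n-1, by omega⟩ v = 0 ∨ C ⟨n-1, by omega⟩ v = 1 := by
    intro v
    have h := hC ⟨n-1, by omega⟩ v
    rwa [if_neg (by simp only [Fin.val_mk]; omega)] at h
  have hrow : ∀ a b : Fin n, (a:ℕ) + 1 < n → C a b = if (b:ℕ) = (a:ℕ)+1 then 1 else 0 := by
    intro a b ha
    have h := hC a b
    rwa [if_pos ha] at h
  have hlt : n - 1 < n := by omega
  rw [Matrix.add_apply, Matrix.transpose_apply]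
  by_cases hi : (i:ℕ) + 1 < n <;> by_cases hj : (j:ℕ) + 1 < n
  · rw [hrow i j hi, hrow j i hj]
    split_ifs with h1 h2 h2
    · exact absurd h2 (by omega)
    · exact iff_of_true (by norm_num) (Or.inl h1.symm)
    · exact iff_of_true (by norm_num) (Or.inr (Or.inl h2.symm))
    · refine iff_of_false (by norm_num) ?_
      rintro (h|h|⟨h,-⟩|⟨h,-⟩) <;> omega
  · have hjeq : j = ⟨n-1, hlt⟩ := Fin.ext (by simp only [Fin.val_mk]; have := j.isLt; omega)
    rw [hjeq]
    rcases hb i with hbi | hbi <;>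
      rw [hrow i _ hi, hbi] <;>
      split_ifs with h1 <;>
      simp only [Fin.val_mk] at h1 ⊢ <;>
      norm_num <;>
      omega
  · have hieq : i = ⟨n-1, hlt⟩ := Fin.ext (by simp only [Fin.val_mk]; have := i.isLt; omega)
    rw [hieq]
    rcases hb j with hbj | hbj <;>
      rw [hrow j _ hj, hbj] <;>
      split_ifs with h1 <;>
      simp only [Fin.val_mk] at h1 ⊢ <;>
      norm_num <;>
      omega
  · have hjeq : j = ⟨n-1, hlt⟩ := Fin.ext (by simp only [Fin.val_mk]; have := j.isLt; omega)
    have hieq : i = ⟨n-1, hlt⟩ := Fin.ext (by simp only [Fin.val_mk]; have := i.isLt; omega)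
    rw [hjeq, hieq, hε]
    simp only [Fin.val_mk]
    norm_num

theorem HasWalk.mono {R' : Fin n → Fin n → Prop} (h : ∀ a b, R a b → R' a b) :
    ∀ {k : ℕ} {i j : Fin n}, HasWalk R k i j → HasWalk R' k i j := by
  intro k
  induction k with
  | zero => intro i j hw; exact hw
  | succ k ih => rintro i j ⟨w, hw, hw'⟩; exact ⟨w, h _ _ hw, ih hw'⟩

end Support

/-- adjacency of the lollipop graph -/
def LAdj (n : ℕ) (i j : Fin n) : Prop :=
  (i:ℕ)+1 = (j:ℕ) ∨ (j:ℕ)+1 = (i:ℕ) ∨ ((i:ℕ) = n-1 ∧ (j:ℕ) = n-3) ∨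
    ((i:ℕ) = n-3 ∧ (j:ℕ) = n-1)

/-- the extremal companion matrix (with free parameter `e ∈ {0,1}` at position
`(n-1, n-2)`) -/
def lolC (n : ℕ) (e : ℝ) : Matrix (Fin n) (Fin n) ℝ :=
  Matrix.of fun i j =>
    if (j:ℕ) = (i:ℕ) + 1 then 1
    else if (i:ℕ) = n-1 ∧ (j:ℕ) = n-3 then 1
    else if (i:ℕ) = n-1 ∧ (j:ℕ) = n-2 then e
    else 0

theorem lolC_isCompanion (hn : 4 ≤ n) {e : ℝ} (he : e = 0 ∨ e = 1) :
    IsCompanion (lolC n e) := by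
  intro i j
  by_cases hi : (i:ℕ) + 1 < n
  · rw [if_pos hi]
    simp only [lolC, Matrix.of_apply]
    split_ifs with h1 h2 h3 <;> first | rfl | omega
  · rw [if_neg hi]
    simp only [lolC, Matrix.of_apply]
    split_ifs with h1 h2 h3
    · exact Or.inr rfl
    · exact Or.inr rfl
    · rcases he with rfl | rfl
      · exact Or.inl rfl
      · exact Or.inr rfl
    · exact Or.inl rfl

theorem lolC_last (hn : 4 ≤ n) {e : ℝ} (hlt : n - 1 < n) (j : Fin n) :
    lolC n e ⟨n-1, hlt⟩ j =
      (if (j:ℕ) = n-3 then 1 else if (j:ℕ) = n-2 then e else 0) := by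
  have hj := j.isLt
  simp only [lolC, Matrix.of_apply, Fin.val_mk]
  rw [if_neg (by omega)]
  simp only [show (n-1 = n-1) = True from by simp, true_and]

theorem lolC_alpha (hn : 4 ≤ n) {e : ℝ} (hlt : n - 1 < n) (h0 : 0 < n) :
    lolC n e ⟨n-1, hlt⟩ ⟨0, h0⟩ = 0 := by
  rw [lolC_last hn hlt]
  simp only [Fin.val_mk]
  rw [if_neg (by omega), if_neg (by omega)]

theorem lolC_eps (hn : 4 ≤ n) {e : ℝ} (hlt : n - 1 < n) :
    lolC n e ⟨n-1, hlt⟩ ⟨n-1, hlt⟩ = 0 := by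
  rw [lolC_last hn hlt]
  simp only [Fin.val_mk]
  rw [if_neg (by omega), if_neg (by omega)]

theorem lolC_nonneg (hn : 4 ≤ n) {e : ℝ} (he : e = 0 ∨ e = 1) (i j : Fin n) :
    0 ≤ lolC n e i j := by
  simp only [lolC, Matrix.of_apply]
  rcases he with rfl | rfl <;> split_ifs <;> norm_num

theorem lolA_nonneg (hn : 4 ≤ n) {e : ℝ} (he : e = 0 ∨ e = 1) (i j : Fin n) :
    0 ≤ (lolC n e + (lolC n e).transpose) i j := by
  rw [Matrix.add_apply, Matrix.transpose_apply]
  exact add_nonneg (lolC_nonneg hn he i j) (lolC_nonneg hn he j i)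

theorem lolA_support (hn : 4 ≤ n) {e : ℝ} (he : e = 0 ∨ e = 1) (i j : Fin n) :
    0 < (lolC n e + (lolC n e).transpose) i j ↔ LAdj n i j := by
  have hlt : n - 1 < n := by omega
  rw [support_iff hn (lolC_isCompanion hn he) (lolC_alpha hn hlt (by omega))
    (lolC_eps hn hlt), lolC_last hn hlt i, lolC_last hn hlt j]
  have hi := i.isLt; have hj := j.isLt
  unfold LAdj
  constructor
  · rintro (h | h | ⟨h1, h2⟩ | ⟨h1, h2⟩)
    · exact Or.inl h
    · exact Or.inr (Or.inl h)
    · split_ifs at h2 with ha hb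
      · exact Or.inr (Or.inr (Or.inl ⟨h1, ha⟩))
      · rcases he with rfl | rfl
        · norm_num at h2
        · exact Or.inr (Or.inl (by omega))
      · norm_num at h2
    · split_ifs at h2 with ha hb
      · exact Or.inr (Or.inr (Or.inr ⟨ha, h1⟩))
      · rcases he with rfl | rfl
        · norm_num at h2
        · exact Or.inl (by omega)
      · norm_num at h2
  · rintro (h | h | ⟨h1, h2⟩ | ⟨h1, h2⟩)
    · exact Or.inl h
    · exact Or.inr (Or.inl h)
    · exact Or.inr (Or.inr (Or.inl ⟨h1, by rw [if_pos h2]⟩))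
    · exact Or.inr (Or.inr (Or.inr ⟨h2, by rw [if_pos h1]⟩))

theorem lol_main (hn : 4 ≤ n) {A : Matrix (Fin n) (Fin n) ℝ}
    (h0 : ∀ i j, 0 ≤ A i j) (hsupp : ∀ i j, 0 < A i j ↔ LAdj n i j) :
    IsPrimitive A ∧ ExpIs A (2*(n-2)) := by
  set R : Fin n → Fin n → Prop := fun a b => 0 < A a b with hR
  have hsym : ∀ a b, R a b → R b a := by
    intro a b h
    have h' : 0 < A a b := h
    rw [hsupp] at h'
    show 0 < A b a
    rw [hsupp]
    unfold LAdj at h' ⊢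
    tauto
  have hpath : ∀ a b : Fin n, (a:ℕ) + 1 = (b:ℕ) → R a b := by
    intro a b h
    show 0 < A a b
    rw [hsupp]
    exact Or.inl h
  have hchord : R ⟨n-3, by omega⟩ ⟨n-1, by omega⟩ := by
    show 0 < A _ _
    rw [hsupp]
    exact Or.inr (Or.inr (Or.inr ⟨rfl, rfl⟩))
  have hub : ∀ u v : Fin n, HasWalk R (2*n-4) u v := lol_walk_ub hn hsym hpath hchord
  have hposk : ∀ i j, 0 < (A ^ (2*n-4)) i j :=
    fun i j => (pow_entry_pos_iff h0 (2*n-4) i j).2 (hub i j)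
  have hRform : ∀ a b : Fin n, R a b →
      ((a : ℕ) + 1 = b ∨ (b : ℕ) + 1 = a ∨ ((a : ℕ) = n-1 ∧ (b : ℕ) = n-3) ∨
        ((a : ℕ) = n-3 ∧ (b : ℕ) = n-1)) := by
    intro a b h
    have h' : 0 < A a b := h
    rw [hsupp] at h'
    exact h' 
  have hlb : ∀ k, 0 < k → (∀ i j, 0 < (A ^ k) i j) → 2*n-4 ≤ k := by
    intro k hk0 hkpos
    by_cases hk2 : k % 2 = 0
    · have hw : HasWalk R k ⟨1, by omega⟩ ⟨0, by omega⟩ :=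
        (pow_entry_pos_iff h0 k _ _).1 (hkpos _ _)
      have := lol_walk_lb hn hRform k ⟨1, by omega⟩ ⟨0, by omega⟩ (by simp) hw
      simp only [Fin.val_mk] at this
      unfold mFun at this
      split_ifs at this <;> omega
    · have hw : HasWalk R k ⟨0, by omega⟩ ⟨0, by omega⟩ :=
        (pow_entry_pos_iff h0 k _ _).1 (hkpos _ _)
      have := lol_walk_lb hn hRform k ⟨0, by omega⟩ ⟨0, by omega⟩ (by simp) hw
      simp only [Fin.val_mk] at this
      unfold mFun at this
      split_ifs at this <;> omega
  refine ⟨⟨h0, 2*n-4, by omega, hposk⟩, ?_⟩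
  have h24 : 2*(n-2) = 2*n-4 := by omega
  rw [ExpIs, h24]
  exact ⟨⟨by omega, hposk⟩, fun k hk => hlb k hk.1 hk.2⟩

theorem forward (hn : 4 ≤ n) {C : Matrix (Fin n) (Fin n) ℝ}
    (hC : IsCompanion C)
    (hlt : n - 1 < n) (h0n : 0 < n) (hm2 : n - 2 < n) (hm3 : n - 3 < n)
    (hα : C ⟨n-1, hlt⟩ ⟨0, h0n⟩ = 0) (hε : C ⟨n-1, hlt⟩ ⟨n-1, hlt⟩ = 0)
    (hprim : IsPrimitive (C + C.transpose)) (hexp : ExpIs (C + C.transpose) (2*(n-2)))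
    : C + C.transpose = lolC n 0 + (lolC n 0).transpose ∨
      C + C.transpose = lolC n 1 + (lolC n 1).transpose := by
  have h0 : ∀ i j, 0 ≤ (C + C.transpose) i j := hprim.1
  have hsupp : ∀ i j, 0 < (C + C.transpose) i j ↔
      ((i:ℕ) + 1 = (j:ℕ) ∨ (j:ℕ) + 1 = (i:ℕ) ∨
       ((i:ℕ) = n-1 ∧ C ⟨n-1, hlt⟩ j = 1) ∨
       ((j:ℕ) = n-1 ∧ C ⟨n-1, hlt⟩ i = 1)) := fun i j => support_iff hn hC hα hε i j
  have hb : ∀ v : Fin n, C ⟨n-1, hlt⟩ v = 0 ∨ C ⟨n-1, hlt⟩ v = 1 := by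
    intro v
    have h := hC ⟨n-1, hlt⟩ v
    rwa [if_neg (by simp only [Fin.val_mk]; omega)] at h
  set R : Fin n → Fin n → Prop := fun a b => 0 < (C + C.transpose) a b with hRdef
  have hsym : ∀ a b, R a b → R b a := by
    intro a b h
    have h' : 0 < (C + C.transpose) a b := h
    rw [hsupp] at h'
    show 0 < (C + C.transpose) b a
    rw [hsupp]
    tauto
  have hpath : ∀ a b : Fin n, (a:ℕ) + 1 = (b:ℕ) → R a b := by
    intro a b h
    show 0 < (C + C.transpose) a b
    rw [hsupp]
    exact Or.inl h
  have hexp2 : ∀ k, 0 < k → (∀ i j, 0 < ((C + C.transpose) ^ k) i j) → 2*(n-2) ≤ k :=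
    fun k h1 h2 => hexp.2 ⟨h1, h2⟩
  -- case B : a long odd chord exists
  by_cases hBodd : ∃ j : Fin n, 1 ≤ (j:ℕ) ∧ (j:ℕ) ≤ n-5 ∧ (n + (j:ℕ)) % 2 = 1 ∧
      C ⟨n-1, hlt⟩ j = 1
  · exfalso
    obtain ⟨j, hj1, hj5, hjp, hCj⟩ := hBodd
    have hjn : (j:ℕ) < n := j.isLt
    have hchord : R ⟨(j:ℕ), hjn⟩ ⟨n-1, hlt⟩ := by
      show 0 < (C + C.transpose) _ _
      rw [hsupp]
      refine Or.inr (Or.inr (Or.inr ⟨by simp, ?_⟩))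
      rwa [show (⟨(j:ℕ), hjn⟩ : Fin n) = j from Fin.ext rfl]
    have hwalks := caseB_walk_ub hn hsym hpath hj1 hj5 hjp hchord
    have := hexp2 (2*n-6) (by omega) (fun i j => (pow_entry_pos_iff h0 _ i j).2 (hwalks i j))
    omega
  · by_cases hTri : C ⟨n-1, hlt⟩ ⟨n-3, hm3⟩ = 1
    · by_cases hExtra : ∃ j : Fin n, 1 ≤ (j:ℕ) ∧ (j:ℕ) ≤ n-4 ∧ C ⟨n-1, hlt⟩ j = 1
      · exfalso
        obtain ⟨j, hj1, hj4, hCj⟩ := hExtra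
        have hjn : (j:ℕ) < n := j.isLt
        by_cases hjp : (n + (j:ℕ)) % 2 = 1
        · exact hBodd ⟨j, hj1, by omega, hjp, hCj⟩
        · have hchordT : R ⟨n-3, hm3⟩ ⟨n-1, hlt⟩ := by
            show 0 < (C + C.transpose) _ _
            rw [hsupp]
            exact Or.inr (Or.inr (Or.inr ⟨by simp, hTri⟩))
          have hchordJ : R ⟨n-1, hlt⟩ ⟨(j:ℕ), hjn⟩ := by
            show 0 < (C + C.transpose) _ _
            rw [hsupp]
            refine Or.inr (Or.inr (Or.inl ⟨by simp, ?_⟩))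
            rwa [show (⟨(j:ℕ), hjn⟩ : Fin n) = j from Fin.ext rfl]
          have hwalks := caseC_walk_ub hn hsym hpath hj1 hj4 (by omega) hchordT hchordJ
          have := hexp2 (2*n-5) (by omega)
            (fun i j => (pow_entry_pos_iff h0 _ i j).2 (hwalks i j))
          omega
      · -- the lollipop case
        have hclass : ∀ v : Fin n, C ⟨n-1, hlt⟩ v = 1 → ((v:ℕ) = n-3 ∨ (v:ℕ) = n-2) := by
          intro v hv
          by_contra hcon
          push_neg at hcon
          have hvn := v.isLt
          have hv0 : (v:ℕ) ≠ 0 := by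
            intro h
            rw [show v = ⟨0, h0n⟩ from Fin.ext h, hα] at hv
            norm_num at hv
          have hvl : (v:ℕ) ≠ n-1 := by
            intro h
            rw [show v = ⟨n-1, hlt⟩ from Fin.ext h, hε] at hv
            norm_num at hv
          exact hExtra ⟨v, by omega, by omega, hv⟩
        have heb := hb ⟨n-2, hm2⟩
        have hCeq : C = lolC n (C ⟨n-1, hlt⟩ ⟨n-2, hm2⟩) := by
          funext a b
          by_cases ha : (a:ℕ)+1 < n
          · have h := hC a b
            rw [if_pos ha] at h
            rw [h]
            simp only [lolC, Matrix.of_apply]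
            split_ifs <;> first | rfl | omega
          · have haeq : a = ⟨n-1, hlt⟩ := Fin.ext (by simp only [Fin.val_mk]; have := a.isLt; omega)
            rw [haeq, lolC_last hn hlt b]
            split_ifs with h1 h2
            · rw [show b = ⟨n-3, hm3⟩ from Fin.ext (by simp only [Fin.val_mk]; omega)]
              exact hTri
            · rw [show b = ⟨n-2, hm2⟩ from Fin.ext (by simp only [Fin.val_mk]; omega)]
            · rcases hb b with h | h
              · exact h
              · rcases hclass b h with h3 | h3 <;> omega
        rcases heb with h | h
        · left; rw [hCeq, h]
        · right; rw [hCeq, h]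
    · -- no odd cycle : not primitive
      exfalso
      have hpar : ∀ a b, R a b → ((a:ℕ) + (b:ℕ)) % 2 = 1 := by
        intro a b h
        have h' : 0 < (C + C.transpose) a b := h
        rw [hsupp] at h'
        have han := a.isLt; have hbn := b.isLt
        have key : ∀ v : Fin n, C ⟨n-1, hlt⟩ v = 1 → ((n-1) + (v:ℕ)) % 2 = 1 := by
          intro v hv
          have hvn := v.isLt
          have hv0 : (v:ℕ) ≠ 0 := by
            intro hh
            rw [show v = ⟨0, h0n⟩ from Fin.ext hh, hα] at hv
            norm_num at hv
          have hvl : (v:ℕ) ≠ n-1 := by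
            intro hh
            rw [show v = ⟨n-1, hlt⟩ from Fin.ext hh, hε] at hv
            norm_num at hv
          have hv3 : (v:ℕ) ≠ n-3 := by
            intro hh
            rw [show v = ⟨n-3, hm3⟩ from Fin.ext hh] at hv
            exact hTri hv
          by_cases hv2 : (v:ℕ) = n-2
          · omega
          · -- 1 ≤ v ≤ n-4
            by_cases hp : (n + (v:ℕ)) % 2 = 1
            · exact absurd ⟨v, by omega, by omega, hp, hv⟩ hBodd
            · omega
        rcases h' with h | h | ⟨h1, h2⟩ | ⟨h1, h2⟩
        · omega
        · omega
        · have := key b h2; omega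
        · have := key a h2; omega
      obtain ⟨k, hk0, hkpos⟩ := hprim.2
      have hw1 : HasWalk R k ⟨0, h0n⟩ ⟨0, h0n⟩ :=
        (pow_entry_pos_iff h0 k _ _).1 (hkpos _ _)
      have hw2 : HasWalk R k ⟨0, h0n⟩ ⟨1, by omega⟩ :=
        (pow_entry_pos_iff h0 k _ _).1 (hkpos _ _)
      have hp1 := walk_parity (R := R) hpar k _ _ hw1
      have hp2 := walk_parity (R := R) hpar k _ _ hw2
      simp only [Fin.val_mk] at hp1 hp2
      omega

theorem lolC_entry1 (hn : 4 ≤ n) {e : ℝ} (hlt : n - 1 < n) (hm2 : n - 2 < n) :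
    lolC n e ⟨n-1, hlt⟩ ⟨n-2, hm2⟩ = e := by
  rw [lolC_last hn hlt]
  simp only [Fin.val_mk]
  rw [if_neg (by omega)]
  simp

theorem lolC_entry2 (hn : 4 ≤ n) {e : ℝ} (hlt : n - 1 < n) (hm2 : n - 2 < n) :
    lolC n e ⟨n-2, hm2⟩ ⟨n-1, hlt⟩ = 1 := by
  simp only [lolC, Matrix.of_apply, Fin.val_mk]
  rw [if_pos (by omega)]

end PSCaux

open PSCaux in
/-- For `n ≥ 4`, exactly 2 matrices in `PSC_n^{0,0}` attain the maximum
exponent `2(n-2)`. -/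
theorem card_PSC_zero_zero_max_exp {n : ℕ} (hn : 4 ≤ n) :
    Set.ncard {A ∈ companionClass n (by omega) 0 0 |
      IsPrimitive A ∧ ExpIs A (2 * (n - 2))} = 2 := by
  have hlt : n - 1 < n := by omega
  have h0n : 0 < n := by omega
  have hm2 : n - 2 < n := by omega
  have hm3 : n - 3 < n := by omega
  have key : ∀ e : ℝ, (e = 0 ∨ e = 1) →
      IsPrimitive (lolC n e + (lolC n e).transpose) ∧
      ExpIs (lolC n e + (lolC n e).transpose) (2*(n-2)) :=
    fun e he => lol_main hn (lolA_nonneg hn he) (lolA_support hn he)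
  have hset : {A ∈ companionClass n (by omega) 0 0 |
      IsPrimitive A ∧ ExpIs A (2 * (n - 2))} =
      {lolC n 0 + (lolC n 0).transpose, lolC n 1 + (lolC n 1).transpose} := by
    ext A
    simp only [Set.mem_setOf_eq, Set.mem_insert_iff, Set.mem_singleton_iff]
    constructor
    · rintro ⟨⟨Cm, hCm, hαm, hεm, rfl⟩, hprim, hexp⟩
      exact forward hn hCm hlt h0n hm2 hm3 hαm hεm hprim hexp
    · rintro (rfl | rfl)
      · exact ⟨⟨lolC n 0, lolC_isCompanion hn (Or.inl rfl),
          lolC_alpha hn hlt h0n, lolC_eps hn hlt, rfl⟩, key 0 (Or.inl rfl)⟩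
      · exact ⟨⟨lolC n 1, lolC_isCompanion hn (Or.inr rfl),
          lolC_alpha hn hlt h0n, lolC_eps hn hlt, rfl⟩, key 1 (Or.inr rfl)⟩
  rw [hset]
  refine Set.ncard_pair ?_
  intro h
  have h2 := congrFun (congrFun h ⟨n-1, hlt⟩) ⟨n-2, hm2⟩
  rw [Matrix.add_apply, Matrix.transpose_apply, Matrix.add_apply, Matrix.transpose_apply,
    lolC_entry1 hn hlt hm2, lolC_entry1 hn hlt hm2, lolC_entry2 hn hlt hm2,
    lolC_entry2 hn hlt hm2] at h2
  norm_num at h2
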